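/- Let A ⊆ B and A' ⊆ B' be rings and let φ : B → B' be a ring homomorphism with φ(A) ⊆ A'. Let v be a valuation on B' with kernel p, valuation ring R_v ⊆ k(p), and semi-valuation ring S_v ⊆ B'_p, and let w = v ∘ φ, with kernel φ⁻¹(p), valuation ring R_w ⊆ k(φ⁻¹(p)), and semi-valuation ring S_w ⊆ B_{φ⁻¹(p)}. Then R_w = R_v ∩ k(φ⁻¹(p)) (intersection inside k(p) via the induced embedding k(φ⁻¹(p)) → k(p)), and the canonical homomorphism B_{φ⁻¹(p)} → B'_p maps S_w into S_v, the induced homomorphism S_w → S_v being a local homomorphism of local rings. -/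

import Mathlib

/-- pullback of semi-valuation rings.  Let `φ : B → B'` map `A` into `A'`,
let `v` be a valuation on `B'` with kernel `p = supp v`, valuation ring
`R_v ⊆ k(p)` and semi-valuation ring `S_v ⊆ B'_p`, and let `w = v ∘ φ`, with kernel
`φ⁻¹(p) = supp w`, valuation ring `R_w ⊆ k(φ⁻¹ p)` and semi-valuation ring
`S_w ⊆ B_{φ⁻¹ p}`.  Then, with `g : B_{φ⁻¹ p} → B'_p` the canonical homomorphism and
`ι : k(φ⁻¹ p) → k(p)` the induced embedding of residue fields,
`R_w = R_v ∩ k(φ⁻¹ p)` (i.e. `R_w = ι⁻¹(R_v)`), `g` maps `S_w` into `S_v`, and the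
induced homomorphism `S_w → S_v` is local. -/
theorem stmt18 {B B' : Type*} [CommRing B] [CommRing B'] {Γ : Type*}
    [LinearOrderedCommGroupWithZero Γ]
    (A : Subring B) (A' : Subring B') (φ : B →+* B') (hAA' : ∀ a ∈ A, φ a ∈ A')
    (v : Valuation B' Γ) (hA' : ∀ a ∈ A', v a ≤ 1) :
    letI w : Valuation B Γ := v.comap φ
    letI g : Localization.AtPrime w.supp →+* Localization.AtPrime v.supp :=
      Localization.localRingHom w.supp v.supp φ (Valuation.comap_supp v φ)
    letI vp := v.extendToLocalization le_rfl (Localization.AtPrime v.supp)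
    letI wq := w.extendToLocalization le_rfl (Localization.AtPrime w.supp)
    letI hloc : IsLocalHom g :=
      Localization.isLocalHom_localRingHom _ _ _ (Valuation.comap_supp v φ)
    letI ι : IsLocalRing.ResidueField (Localization.AtPrime w.supp) →+*
        IsLocalRing.ResidueField (Localization.AtPrime v.supp) :=
      IsLocalRing.ResidueField.map g
    -- R_w = R_v ∩ k(φ⁻¹ p)
    (Subring.map (IsLocalRing.residue (Localization.AtPrime w.supp)) wq.integer
      = Subring.comap ι
          (Subring.map (IsLocalRing.residue (Localization.AtPrime v.supp)) vp.integer)) ∧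
    -- g maps S_w into S_v
    (∀ x : Localization.AtPrime w.supp, wq x ≤ 1 → vp (g x) ≤ 1) ∧
    -- and S_w → S_v is a local homomorphism
    (∀ x : Localization.AtPrime w.supp, wq x < 1 → vp (g x) < 1) := by
  set w : Valuation B Γ := v.comap φ with hw
  set g : Localization.AtPrime w.supp →+* Localization.AtPrime v.supp :=
    Localization.localRingHom w.supp v.supp φ (Valuation.comap_supp v φ) with hg
  set vp := v.extendToLocalization le_rfl (Localization.AtPrime v.supp) with hvp
  set wq := w.extendToLocalization le_rfl (Localization.AtPrime w.supp) with hwq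
  haveI hloc : IsLocalHom g :=
    Localization.isLocalHom_localRingHom _ _ _ (Valuation.comap_supp v φ)
  set ι : IsLocalRing.ResidueField (Localization.AtPrime w.supp) →+*
      IsLocalRing.ResidueField (Localization.AtPrime v.supp) :=
    IsLocalRing.ResidueField.map g with hι
  -- key: vp ∘ g = wq
  have key : ∀ x : Localization.AtPrime w.supp, vp (g x) = wq x := by
    intro x
    obtain ⟨⟨a, s⟩, hx⟩ := IsLocalization.mk'_surjective w.supp.primeCompl x
    dsimp only at hx; subst hx
    have hs : w (s : B) ≠ 0 := s.2
    have hws : wq ((algebraMap B (Localization.AtPrime w.supp)) (s : B)) = w (s : B) :=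
      Valuation.extendToLocalization_apply_map_apply _ _ _ _
    have hwa : wq ((algebraMap B (Localization.AtPrime w.supp)) a) = w a :=
      Valuation.extendToLocalization_apply_map_apply _ _ _ _
    have hvs : vp ((algebraMap B' (Localization.AtPrime v.supp)) (φ (s : B))) = v (φ (s : B)) :=
      Valuation.extendToLocalization_apply_map_apply _ _ _ _
    have hva : vp ((algebraMap B' (Localization.AtPrime v.supp)) (φ a)) = v (φ a) :=
      Valuation.extendToLocalization_apply_map_apply _ _ _ _
    have h1 : wq (IsLocalization.mk' _ a s) * w (s : B) = w a := by
      have := congrArg wq (IsLocalization.mk'_spec (Localization.AtPrime w.supp) a s)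
      rw [map_mul, hws, hwa] at this; exact this
    have h2 : vp (g (IsLocalization.mk' _ a s)) * w (s : B) = w a := by
      rw [hg, Localization.localRingHom_mk']
      have := congrArg vp (IsLocalization.mk'_spec (Localization.AtPrime v.supp) (φ a)
        (⟨φ s, s.2⟩ : v.supp.primeCompl))
      rw [map_mul, hvs, hva] at this; exact this
    exact mul_right_cancel₀ hs (h2.trans h1.symm)
  -- maximal ideal elements have vp = 0
  have hmax : ∀ y : Localization.AtPrime v.supp,
      y ∈ IsLocalRing.maximalIdeal _ → vp y = 0 := by
    intro y hy
    obtain ⟨⟨a, s⟩, hy'⟩ := IsLocalization.mk'_surjective v.supp.primeCompl y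
    dsimp only at hy'; subst hy'
    rw [IsLocalization.AtPrime.mk'_mem_maximal_iff (Localization.AtPrime v.supp) v.supp a s] at hy
    have hs : v (s : B') ≠ 0 := s.2
    have hvs : vp ((algebraMap B' (Localization.AtPrime v.supp)) (s : B')) = v (s : B') :=
      Valuation.extendToLocalization_apply_map_apply _ _ _ _
    have hva : vp ((algebraMap B' (Localization.AtPrime v.supp)) a) = v a :=
      Valuation.extendToLocalization_apply_map_apply _ _ _ _
    have h1 : vp (IsLocalization.mk' _ a s) * v (s : B') = v a := by
      have := congrArg vp (IsLocalization.mk'_spec (Localization.AtPrime v.supp) a s)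
      rw [map_mul, hvs, hva] at this; exact this
    have : v a = 0 := (Valuation.mem_supp_iff v a).mp hy
    rcases mul_eq_zero.mp (h1.trans this) with h | h
    · exact h
    · exact absurd h hs
  refine ⟨?_, fun x hx => by rw [key]; exact hx, fun x hx => by rw [key]; exact hx⟩
  ext z
  obtain ⟨z, rfl⟩ := IsLocalRing.residue_surjective z
  simp only [Subring.mem_map, Subring.mem_comap, Valuation.mem_integer_iff]
  constructor
  · rintro ⟨x, hx, hxz⟩
    refine ⟨g x, by rw [key]; exact hx, ?_⟩
    rw [← hxz]
    exact (IsLocalRing.ResidueField.map_residue g x).symm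
  · rintro ⟨y, hy, hyz⟩
    refine ⟨z, ?_, rfl⟩
    have hz : ι (IsLocalRing.residue _ z) = IsLocalRing.residue _ (g z) :=
      IsLocalRing.ResidueField.map_residue g z
    have : IsLocalRing.residue _ (g z) = IsLocalRing.residue _ y := by
      rw [← hz, hyz]
    have hmem : g z - y ∈ IsLocalRing.maximalIdeal (Localization.AtPrime v.supp) := by
      have := Ideal.Quotient.eq.mp this
      exact this
    have : vp (g z) ≤ 1 := by
      calc vp (g z) = vp (y + (g z - y)) := by ring_nf
        _ ≤ max (vp y) (vp (g z - y)) := Valuation.map_add _ _ _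
        _ ≤ 1 := max_le hy (by rw [hmax _ hmem]; exact zero_le_one)
    rw [← key]; exact this
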